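/- Let b, c ≥ 1 and let f be a polynomial in variables p⁽¹⁾,…,p⁽ᵇ⁾, q⁽¹⁾,…,q⁽ᶜ⁾ over a field k, symmetric separately in the p's and in the q's. If the substitution p⁽ᵇ⁾ ↦ Z, q⁽ᶜ⁾ ↦ Z yields a polynomial independent of Z and equal to zero (i.e. f lies in the kernel of the evaluation map ψ), then f is divisible by the product ∏_{1≤i≤b, 1≤j≤c} (p⁽ⁱ⁾ − q⁽ʲ⁾). -/

import Mathlib

open MvPolynomial



section Aux

variable {𝕜 : Type*} [Field 𝕜] {σ : Type*} [DecidableEq σ]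

noncomputable def PhiEquiv (𝕜 : Type*) [Field 𝕜] {σ : Type*} [DecidableEq σ] (a : σ) :
    MvPolynomial σ 𝕜 ≃ₐ[𝕜] Polynomial (MvPolynomial {v : σ // v ≠ a} 𝕜) :=
  (renameEquiv 𝕜 (Equiv.optionSubtypeNe a).symm).trans (optionEquivLeft 𝕜 _)

lemma Phi_X_self (a : σ) : PhiEquiv 𝕜 a (X a) = Polynomial.X := by
  simp [PhiEquiv, Equiv.optionSubtypeNe_symm_self, optionEquivLeft_X_none]

lemma Phi_X_ne (a : σ) {v : σ} (h : v ≠ a) :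
    PhiEquiv 𝕜 a (X v) = Polynomial.C (X ⟨v, h⟩) := by
  simp [PhiEquiv, Equiv.optionSubtypeNe_symm_of_ne h, optionEquivLeft_X_some]

lemma Phi_C (a : σ) (r : 𝕜) : PhiEquiv 𝕜 a (C r) = Polynomial.C (C r) := by
  simp [PhiEquiv, optionEquivLeft_C]

end Aux

section Aux2

variable {𝕜 : Type*} [Field 𝕜] {σ : Type*} [DecidableEq σ]

lemma phi_eval_eq (a : σ) {b : σ} (hba : b ≠ a) (f : MvPolynomial σ 𝕜) :
    rename (Subtype.val) ((PhiEquiv 𝕜 a f).eval (X ⟨b, hba⟩)) =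
      aeval (fun v => if v = a then X b else X v) f := by
  have hhom : ((rename (Subtype.val : {v : σ // v ≠ a} → σ)).toRingHom.comp
      ((Polynomial.evalRingHom (X ⟨b, hba⟩)).comp (PhiEquiv 𝕜 a : MvPolynomial σ 𝕜 →+* _))) =
      ((aeval (R := 𝕜) (fun v => if v = a then (X b : MvPolynomial σ 𝕜) else X v)).toRingHom) := by
    apply ringHom_ext
    · intro r
      simp [Phi_C, algebraMap_eq]
    · intro v
      by_cases hv : v = a
      · subst hv
        simp [Phi_X_self]
      · simp [Phi_X_ne a hv, hv]
  exact DFunLike.congr_fun hhom f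

lemma sub_dvd_of_aeval_eq_zero {a b : σ} (hab : a ≠ b) {f : MvPolynomial σ 𝕜}
    (h : aeval (fun v => if v = a then (X b : MvPolynomial σ 𝕜) else X v) f = 0) :
    (X a - X b : MvPolynomial σ 𝕜) ∣ f := by
  have hba : b ≠ a := hab.symm
  have h2 : (PhiEquiv 𝕜 a f).eval (X ⟨b, hba⟩) = 0 := by
    apply rename_injective _ Subtype.val_injective
    rw [phi_eval_eq a hba f, h, map_zero]
  have h3 : (Polynomial.X - Polynomial.C (X ⟨b, hba⟩)) ∣ PhiEquiv 𝕜 a f :=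
    Polynomial.dvd_iff_isRoot.mpr h2
  have h4 : PhiEquiv 𝕜 a (X a - X b) = Polynomial.X - Polynomial.C (X ⟨b, hba⟩) := by
    rw [map_sub, Phi_X_self, Phi_X_ne a hba]
  rw [← h4] at h3
  have := map_dvd (PhiEquiv 𝕜 a).symm h3
  simpa using this

lemma prime_X_sub_X {a b : σ} (hab : a ≠ b) :
    Prime (X a - X b : MvPolynomial σ 𝕜) := by
  have hba : b ≠ a := hab.symm
  rw [← MulEquiv.prime_iff (PhiEquiv 𝕜 a).toMulEquiv]
  have h4 : (PhiEquiv 𝕜 a).toMulEquiv (X a - X b) = Polynomial.X - Polynomial.C (X ⟨b, hba⟩) := by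
    show PhiEquiv 𝕜 a (X a - X b) = _
    rw [map_sub, Phi_X_self, Phi_X_ne a hba]
  rw [h4]
  exact Polynomial.prime_X_sub_C _

lemma prod_primes_dvd'' {α : Type*} [CommMonoidWithZero α] [IsCancelMulZero α] {ι : Type*} [DecidableEq ι]
    (s : Finset ι) (p : ι → α) :
    (∀ i ∈ s, Prime (p i)) → (∀ i ∈ s, ∀ j ∈ s, i ≠ j → ¬ p i ∣ p j) →
    ∀ n : α, (∀ i ∈ s, p i ∣ n) → (∏ i ∈ s, p i) ∣ n := by
  induction s using Finset.induction_on with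
  | empty => intro _ _ n _; simp
  | @insert a s ha ih =>
    intro hp hnd n h
    obtain ⟨g, hg⟩ := h a (Finset.mem_insert_self a s)
    rw [Finset.prod_insert ha, hg]
    refine mul_dvd_mul_left _ (ih ?_ ?_ g ?_)
    · exact fun i hi => hp i (Finset.mem_insert_of_mem hi)
    · exact fun i hi j hj hij => hnd i (Finset.mem_insert_of_mem hi) j (Finset.mem_insert_of_mem hj) hij
    · intro i hi
      have hpi := hp i (Finset.mem_insert_of_mem hi)
      have hia : i ≠ a := fun hia => ha (hia ▸ hi)
      have : p i ∣ p a * g := hg ▸ h i (Finset.mem_insert_of_mem hi)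
      rcases hpi.dvd_mul.mp this with h' | h'
      · exact absurd h' (hnd i (Finset.mem_insert_of_mem hi) a (Finset.mem_insert_self a s) hia)
      · exact h'

end Aux2

section Main

variable {𝕜 : Type*} [Field 𝕜] {b c : ℕ}

lemma not_dvd_pairs {i k : Fin (b+1)} {j l : Fin (c+1)} (h : (i, j) ≠ (k, l)) :
    ¬ ((X (Sum.inl i) - X (Sum.inr j) : MvPolynomial (Fin (b+1) ⊕ Fin (c+1)) 𝕜) ∣
      (X (Sum.inl k) - X (Sum.inr l))) := by
  rintro ⟨g, hg⟩
  set E := aeval (R := 𝕜) (fun v : Fin (b+1) ⊕ Fin (c+1) =>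
    if v = Sum.inl i then (X (Sum.inr j) : MvPolynomial (Fin (b+1) ⊕ Fin (c+1)) 𝕜) else X v)
  have h1 : E (X (Sum.inl k) - X (Sum.inr l)) = 0 := by
    rw [hg, map_mul, map_sub, aeval_X, aeval_X]
    simp
  rw [map_sub, aeval_X, aeval_X,
    if_neg (show (Sum.inr l : Fin (b+1) ⊕ Fin (c+1)) ≠ Sum.inl i by simp)] at h1
  by_cases hk : k = i
  · rw [if_pos (by rw [hk]), sub_eq_zero] at h1
    have : j = l := Sum.inr.inj (X_injective h1)
    exact h (by rw [this, hk])
  · rw [if_neg (by simpa using hk), sub_eq_zero] at h1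
    exact absurd (X_injective h1) (by simp)

end Main


/-- Let `f` be a polynomial in variables `p⁽¹⁾,…,p⁽ᵇ⁾, q⁽¹⁾,…,q⁽ᶜ⁾` (with `b, c ≥ 1`),
symmetric separately in the `p`'s and in the `q`'s.  If substituting `p⁽ᵇ⁾ ↦ Z`,
`q⁽ᶜ⁾ ↦ Z` yields the zero polynomial (in particular it is independent of `Z`),
then `f` is divisible by `∏_{i,j} (p⁽ⁱ⁾ − q⁽ʲ⁾)`. -/
theorem supersymmetric_kernel_divisibility
    (𝕜 : Type*) [Field 𝕜] (b c : ℕ)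
    (f : MvPolynomial (Fin (b + 1) ⊕ Fin (c + 1)) 𝕜)
    (hp : ∀ σ : Equiv.Perm (Fin (b + 1)), rename (Sum.map ⇑σ id) f = f)
    (hq : ∀ τ : Equiv.Perm (Fin (c + 1)), rename (Sum.map id ⇑τ) f = f)
    (h0 : MvPolynomial.aeval (fun v : Fin (b + 1) ⊕ Fin (c + 1) =>
        match v with
        | Sum.inl i => if i = Fin.last b then
            (Polynomial.X : Polynomial (MvPolynomial (Fin (b + 1) ⊕ Fin (c + 1)) 𝕜))
          else Polynomial.C (X (Sum.inl i))
        | Sum.inr j => if j = Fin.last c then Polynomial.X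
          else Polynomial.C (X (Sum.inr j))) f = 0) :
    (∏ i : Fin (b + 1), ∏ j : Fin (c + 1), (X (Sum.inl i) - X (Sum.inr j))) ∣ f := by
  -- Step 1: base substitution p_last ↦ q_last kills f
  have hbase : aeval (fun v : Fin (b + 1) ⊕ Fin (c + 1) =>
      if v = Sum.inl (Fin.last b) then
        (X (Sum.inr (Fin.last c)) : MvPolynomial (Fin (b + 1) ⊕ Fin (c + 1)) 𝕜)
      else X v) f = 0 := by
    have hhom : ((Polynomial.evalRingHom
        (X (Sum.inr (Fin.last c)) : MvPolynomial (Fin (b + 1) ⊕ Fin (c + 1)) 𝕜)).comp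
        (aeval (R := 𝕜) (fun v : Fin (b + 1) ⊕ Fin (c + 1) =>
          match v with
          | Sum.inl i => if i = Fin.last b then
              (Polynomial.X : Polynomial (MvPolynomial (Fin (b + 1) ⊕ Fin (c + 1)) 𝕜))
            else Polynomial.C (X (Sum.inl i))
          | Sum.inr j => if j = Fin.last c then Polynomial.X
            else Polynomial.C (X (Sum.inr j)))).toRingHom) =
        (aeval (R := 𝕜) (fun v : Fin (b + 1) ⊕ Fin (c + 1) =>
          if v = Sum.inl (Fin.last b) then
            (X (Sum.inr (Fin.last c)) : MvPolynomial (Fin (b + 1) ⊕ Fin (c + 1)) 𝕜)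
          else X v)).toRingHom := by
      apply ringHom_ext
      · intro r
        simp [algebraMap_eq]
      · intro v
        rcases v with i | j
        · by_cases hi : i = Fin.last b
          · simp [hi]
          · simp only [RingHom.comp_apply, AlgHom.toRingHom_eq_coe, RingHom.coe_coe, aeval_X]
            rw [if_neg hi, if_neg (by simp [hi])]
            simp
        · by_cases hj : j = Fin.last c
          · simp [hj]
          · simp only [RingHom.comp_apply, AlgHom.toRingHom_eq_coe, RingHom.coe_coe, aeval_X]
            rw [if_neg hj, if_neg (by simp)]
            simp
    have hthis := DFunLike.congr_fun hhom f
    simp only [RingHom.comp_apply, AlgHom.toRingHom_eq_coe, RingHom.coe_coe] at hthis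
    rw [← hthis, h0]
    simp
  -- Step 2: every substitution p_i ↦ q_j kills f
  have hstep : ∀ (i0 : Fin (b + 1)) (j0 : Fin (c + 1)),
      aeval (fun v : Fin (b + 1) ⊕ Fin (c + 1) =>
        if v = Sum.inl i0 then
          (X (Sum.inr j0) : MvPolynomial (Fin (b + 1) ⊕ Fin (c + 1)) 𝕜)
        else X v) f = 0 := by
    intro i0 j0
    set σp := Equiv.swap i0 (Fin.last b) with hσp
    set τp := Equiv.swap j0 (Fin.last c) with hτp
    have hinv : rename (Sum.map ⇑σp ⇑τp) f = f := by
      have hcomp : (Sum.map ⇑σp ⇑τp : Fin (b+1) ⊕ Fin (c+1) → Fin (b+1) ⊕ Fin (c+1))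
          = (Sum.map ⇑σp id) ∘ (Sum.map id ⇑τp) := by
        funext v; rcases v with i | j <;> simp
      rw [hcomp, ← rename_rename, hq, hp]
    have hinj : Function.Injective (Sum.map ⇑σp ⇑τp) :=
      Function.Injective.sumMap σp.injective τp.injective
    have hkey : ∀ v : Fin (b + 1) ⊕ Fin (c + 1),
        (if Sum.map ⇑σp ⇑τp v = Sum.inl (Fin.last b) then
          (X (Sum.inr (Fin.last c)) : MvPolynomial (Fin (b + 1) ⊕ Fin (c + 1)) 𝕜)
        else X (Sum.map ⇑σp ⇑τp v)) =
        rename (Sum.map ⇑σp ⇑τp)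
          (if v = Sum.inl i0 then
            (X (Sum.inr j0) : MvPolynomial (Fin (b + 1) ⊕ Fin (c + 1)) 𝕜)
          else X v) := by
      intro v
      rcases v with u | w
      · rw [Sum.map_inl]
        by_cases hu : u = i0
        · subst hu
          rw [if_pos (by simp [hσp, Equiv.swap_apply_left]), if_pos rfl, rename_X]
          simp [hτp, Equiv.swap_apply_left]
        · have h1 : σp u ≠ Fin.last b := fun hcon => hu (by
            simpa [hσp, Equiv.symm_swap, Equiv.swap_apply_right] using congrArg σp.symm hcon)
          rw [if_neg (by simpa using h1), if_neg (by simpa using hu), rename_X]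
          simp
      · rw [Sum.map_inr]
        rw [if_neg (by simp), if_neg (by simp), rename_X]
        simp
    have h2 : rename (Sum.map ⇑σp ⇑τp)
        (aeval (fun v : Fin (b + 1) ⊕ Fin (c + 1) =>
          if v = Sum.inl i0 then
            (X (Sum.inr j0) : MvPolynomial (Fin (b + 1) ⊕ Fin (c + 1)) 𝕜)
          else X v) f) = 0 := by
      rw [comp_aeval_apply]
      calc aeval (fun v => rename (Sum.map ⇑σp ⇑τp)
              (if v = Sum.inl i0 then
                (X (Sum.inr j0) : MvPolynomial (Fin (b + 1) ⊕ Fin (c + 1)) 𝕜)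
              else X v)) f
          = aeval ((fun v : Fin (b + 1) ⊕ Fin (c + 1) =>
              if v = Sum.inl (Fin.last b) then
                (X (Sum.inr (Fin.last c)) : MvPolynomial (Fin (b + 1) ⊕ Fin (c + 1)) 𝕜)
              else X v) ∘ (Sum.map ⇑σp ⇑τp)) f := by
            have hfun : (fun v => rename (Sum.map ⇑σp ⇑τp)
                (if v = Sum.inl i0 then
                  (X (Sum.inr j0) : MvPolynomial (Fin (b + 1) ⊕ Fin (c + 1)) 𝕜)
                else X v)) = ((fun v : Fin (b + 1) ⊕ Fin (c + 1) =>
                  if v = Sum.inl (Fin.last b) then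
                    (X (Sum.inr (Fin.last c)) : MvPolynomial (Fin (b + 1) ⊕ Fin (c + 1)) 𝕜)
                  else X v) ∘ (Sum.map ⇑σp ⇑τp)) := by
              funext v
              exact (hkey v).symm
            rw [hfun]
        _ = aeval _ (rename (Sum.map ⇑σp ⇑τp) f) := (aeval_rename _ _ _).symm
        _ = 0 := by rw [hinv, hbase]
    exact rename_injective _ hinj (h2.trans (map_zero _).symm)
  -- Step 3: conclude
  have hdvd : ∀ (i : Fin (b + 1)) (j : Fin (c + 1)),
      (X (Sum.inl i) - X (Sum.inr j) : MvPolynomial (Fin (b + 1) ⊕ Fin (c + 1)) 𝕜) ∣ f :=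
    fun i j => sub_dvd_of_aeval_eq_zero (by simp) (hstep i j)
  rw [← Finset.prod_product']
  exact prod_primes_dvd'' _ _
    (fun x _ => prime_X_sub_X (by simp))
    (fun x _ y _ hxy => not_dvd_pairs (fun hcon => hxy (by
      obtain ⟨hx1, hx2⟩ := Prod.mk.injEq .. ▸ hcon
      exact Prod.ext hx1 hx2)))
    f (fun x _ => hdvd x.1 x.2)
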